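/- Assume G has the 4-cycle chord property and the 5-cycle chord property. If v is adjacent to (a∘b)^2(v), then v is adjacent to (a∘b)^2(a(v)). -/

import Mathlib

theorem stmt11 {V : Type*} (G : SimpleGraph V)
    (hchord4 : ∀ w1 w2 w3 w4 : V, G.Adj w1 w2 → G.Adj w2 w3 → G.Adj w3 w4 →
      G.Adj w4 w1 → w1 ≠ w3 → w2 ≠ w4 → G.Adj w1 w3 ∨ G.Adj w2 w4)
    (hchord5 : ∀ w1 w2 w3 w4 w5 : V,
      ([w1, w2, w3, w4, w5] : List V).Pairwise (· ≠ ·) →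
      G.Adj w1 w2 → G.Adj w2 w3 → G.Adj w3 w4 → G.Adj w4 w5 → G.Adj w5 w1 →
      G.Adj w1 w3 ∨ G.Adj w2 w4 ∨ G.Adj w3 w5 ∨ G.Adj w4 w1 ∨ G.Adj w5 w2)
    (a b : G ≃g G)
    (haa : ∀ z, a (a z) = z) (hbb : ∀ z, b (b z) = z)
    (hab5 : ∀ z : V, a (b (a (b (a (b (a (b (a (b (z)))))))))) = z)
    (v : V) (hva : G.Adj v (a v)) (hvb : G.Adj v (b v))
    (hdist : ([v, a v, a (b v), a (b (a v)), a (b (a (b v))), a (b (a (b (a v)))), a (b (a (b (a (b v))))), a (b (a (b (a (b (a v)))))), a (b (a (b (a (b (a (b v))))))), a (b (a (b (a (b (a (b (a v))))))))] : List V).Pairwise (· ≠ ·))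
    (hyp : G.Adj v (a (b (a (b v))))) :
    G.Adj v (a (b (a (b (a v))))) := by
  -- key equality: b(abab v) = ababa v
  have key : b (a (b (a (b v)))) = a (b (a (b (a v)))) := by
    have h1 := hab5 v
    have h2 : a (b (a (b (a (a (b (a (b (a v))))))))) = v := by
      simp [haa, hbb]
    have h3 := h1.trans h2.symm
    exact a.injective (b.injective (a.injective (b.injective (a.injective h3))))
  -- v9 = b v
  have h9 : a (b (a (b (a (b (a (b (a v)))))))) = b v := by
    have := hab5 (b v)
    rwa [hbb] at this
  -- edge v4 ~ v5
  have e4 : G.Adj (a (b (a (b v)))) (a (b (a (b (a v))))) :=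
    a.map_adj_iff.mpr (b.map_adj_iff.mpr (a.map_adj_iff.mpr (b.map_adj_iff.mpr hva)))
  -- chord v9 ~ v5 (apply b to hyp)
  have h1 : G.Adj (b v) (a (b (a (b (a v))))) := by
    have := b.map_adj_iff.mpr hyp
    rwa [key] at this
  -- distinctness
  have hne05 : v ≠ a (b (a (b (a v)))) :=
    List.rel_of_pairwise_cons hdist (List.mem_cons_of_mem _ (List.mem_cons_of_mem _
      (List.mem_cons_of_mem _ (List.mem_cons_of_mem _ List.mem_cons_self))))
  have hne49 : a (b (a (b v))) ≠ b v := by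
    intro h
    refine absurd (h.trans h9.symm) ?_
    exact List.rel_of_pairwise_cons
      (hdist.of_cons.of_cons.of_cons.of_cons)
      (List.mem_cons_of_mem _ (List.mem_cons_of_mem _ (List.mem_cons_of_mem _
        (List.mem_cons_of_mem _ List.mem_cons_self))))
  rcases hchord4 v (a (b (a (b v)))) (a (b (a (b (a v))))) (b v)
      hyp e4 h1.symm hvb.symm hne05 hne49 with h | h
  · exact h
  · -- h : v4 ~ v9, apply (ab)^3
    have h2 : G.Adj (a (b (a (b (a (b (a (b (a (b v)))))))))) (a (b (a (b (a (b (b v))))))) :=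
      a.map_adj_iff.mpr (b.map_adj_iff.mpr (a.map_adj_iff.mpr (b.map_adj_iff.mpr
        (a.map_adj_iff.mpr (b.map_adj_iff.mpr h)))))
    rw [hab5, hbb] at h2
    exact h2
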